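/- Let V be a braided monoidal category and A an object of V. The assignments of the previous two constructions are mutually inverse. Precisely: (i) if (A, μ, η, δ, ε) is a bimonoid in V with respect to the inverse braiding and v = c_{A,A}∘(1_A⊗μ)∘(δ⊗1_A), then (1_A⊗ε)∘v = μ and c_{A,A}⁻¹∘v∘(1_A⊗η) = δ; (ii) if (A,v,η,ε) is an augmented lax tricocycloid, and μ = (1_A⊗ε)∘v, δ = c_{A,A}⁻¹∘v∘(1_A⊗η), then c_{A,A}∘(1_A⊗μ)∘(δ⊗1_A) = v. Hence there is a bijection between bimonoid structures on A with respect to the inverse braiding and augmented lax tricocycloid structures on A. -/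

import Mathlib

open CategoryTheory MonoidalCategory

open CategoryTheory MonoidalCategory

variable {V : Type*} [Category V] [MonoidalCategory V] [BraidedCategory V]

/-- A bimonoid in `V` with respect to the inverse braiding: a monoid structure `(μ, η)`
and a comonoid structure `(δ, ε)` satisfying the four bimonoid compatibility axioms, the
middle interchange using the inverse braiding `c⁻¹`. -/
def IsBimonoidInv (A : V) (μ : A ⊗ A ⟶ A) (η : 𝟙_ V ⟶ A) (δ : A ⟶ A ⊗ A)
    (ε : A ⟶ 𝟙_ V) : Prop :=
  ((μ ▷ A) ≫ μ = (α_ A A A).hom ≫ (A ◁ μ) ≫ μ) ∧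
  ((η ▷ A) ≫ μ = (λ_ A).hom) ∧
  ((A ◁ η) ≫ μ = (ρ_ A).hom) ∧
  (δ ≫ (δ ▷ A) ≫ (α_ A A A).hom = δ ≫ (A ◁ δ)) ∧
  (δ ≫ (ε ▷ A) = (λ_ A).inv) ∧
  (δ ≫ (A ◁ ε) = (ρ_ A).inv) ∧
  (η ≫ ε = 𝟙 (𝟙_ V)) ∧
  (μ ≫ ε = (ε ⊗ₘ ε) ≫ (λ_ (𝟙_ V)).hom) ∧
  (η ≫ δ = (λ_ (𝟙_ V)).inv ≫ (η ⊗ₘ η)) ∧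
  (μ ≫ δ = (δ ⊗ₘ δ) ≫ (α_ A A (A ⊗ A)).hom ≫
     (A ◁ ((α_ A A A).inv ≫ ((β_ A A).inv ▷ A) ≫ (α_ A A A).hom)) ≫
     (α_ A A (A ⊗ A)).inv ≫ (μ ⊗ₘ μ))

/-- An augmented lax tricocycloid: `v` satisfies the 3-cocycle condition and `(η, ε)` is
an augmentation for `(A, v)`. -/
def IsAugTricocycloid (A : V) (v : A ⊗ A ⟶ A ⊗ A) (η : 𝟙_ V ⟶ A)
    (ε : A ⟶ 𝟙_ V) : Prop :=
  ((v ▷ A) ≫ (α_ A A A).hom ≫ (A ◁ (β_ A A).hom) ≫ (α_ A A A).inv ≫ (v ▷ A) =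
    (α_ A A A).hom ≫ (A ◁ v) ≫ (α_ A A A).inv ≫ (v ▷ A) ≫
      (α_ A A A).hom ≫ (A ◁ v) ≫ (α_ A A A).inv) ∧
  ((ρ_ A).inv ≫ (A ◁ η) ≫ v ≫ (A ◁ ε) ≫ (ρ_ A).hom = 𝟙 A) ∧
  (v ≫ (ε ▷ A) ≫ (λ_ A).hom = (A ◁ ε) ≫ (ρ_ A).hom) ∧
  ((λ_ A).inv ≫ (η ▷ A) ≫ v = (ρ_ A).inv ≫ (A ◁ η)) ∧
  (η ≫ ε = 𝟙 (𝟙_ V))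


/-- The constructions
`(μ, η, δ, ε) ↦ (v = c ∘ (1⊗μ) ∘ (δ⊗1), η, ε)` and
`(v, η, ε) ↦ (μ = (1⊗ε) ∘ v, η, δ = c⁻¹ ∘ v ∘ (1⊗η), ε)`
between bimonoid structures on `A` (with respect to the inverse braiding) and augmented
lax tricocycloid structures on `A` are mutually inverse:
(i) starting from a bimonoid, recovering `μ` and `δ` from `v` gives back `μ` and `δ`;
(ii) starting from an augmented lax tricocycloid, rebuilding `v` from `μ` and `δ`
gives back `v`.  Hence the two kinds of structure are in bijection. -/
theorem bimonoid_tricocycloid_bijection (A : V) :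
    (∀ (μ : A ⊗ A ⟶ A) (η : 𝟙_ V ⟶ A) (δ : A ⟶ A ⊗ A) (ε : A ⟶ 𝟙_ V),
      IsBimonoidInv A μ η δ ε →
        (((δ ▷ A) ≫ (α_ A A A).hom ≫ (A ◁ μ) ≫ (β_ A A).hom) ≫
            (A ◁ ε) ≫ (ρ_ A).hom = μ ∧
         (ρ_ A).inv ≫ (A ◁ η) ≫
            ((δ ▷ A) ≫ (α_ A A A).hom ≫ (A ◁ μ) ≫ (β_ A A).hom) ≫ (β_ A A).inv = δ)) ∧
    (∀ (v : A ⊗ A ⟶ A ⊗ A) (η : 𝟙_ V ⟶ A) (ε : A ⟶ 𝟙_ V),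
      IsAugTricocycloid A v η ε →
        (((ρ_ A).inv ≫ (A ◁ η) ≫ v ≫ (β_ A A).inv) ▷ A) ≫ (α_ A A A).hom ≫
            (A ◁ (v ≫ (A ◁ ε) ≫ (ρ_ A).hom)) ≫ (β_ A A).hom = v) := by
  constructor
  · rintro μ η δ ε ⟨-, -, hηr, -, hεl, -, -, -, -, -⟩
    constructor
    · slice_lhs 4 5 => rw [← BraidedCategory.braiding_naturality_left]
      slice_lhs 5 6 => rw [braiding_rightUnitor]
      slice_lhs 3 4 => rw [whisker_exchange]
      slice_lhs 4 5 => rw [MonoidalCategory.leftUnitor_naturality]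
      slice_lhs 2 3 => rw [← MonoidalCategory.associator_naturality_left]
      slice_lhs 1 2 => rw [← comp_whiskerRight, hεl]
      have h : (λ_ A).inv ▷ A ≫ (α_ (𝟙_ V) A A).hom ≫ (λ_ (A ⊗ A)).hom = 𝟙 (A ⊗ A) := by
        monoidal
      slice_lhs 1 3 => rw [h]
      simp
    · slice_lhs 6 7 => rw [Iso.hom_inv_id]
      slice_lhs 2 3 => rw [whisker_exchange]
      slice_lhs 3 4 => rw [MonoidalCategory.associator_naturality_right]
      slice_lhs 4 5 => rw [← MonoidalCategory.whiskerLeft_comp, hηr]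
      have h : (α_ A A (𝟙_ V)).hom ≫ A ◁ (ρ_ A).hom = (ρ_ (A ⊗ A)).hom := by monoidal
      slice_lhs 3 4 => rw [h]
      slice_lhs 2 3 => rw [MonoidalCategory.rightUnitor_naturality]
      simp
  · rintro v η ε ⟨hc, -, h3, h4, h5⟩
    have h4' : (η ▷ A) ≫ v = (λ_ A).hom ≫ (ρ_ A).inv ≫ (A ◁ η) := by
      rw [← h4]; simp
    -- Step 1: the key identity obtained from the 3-cocycle condition by inserting `η`
    -- in the middle slot and applying `ε` to the middle slot afterwards.
    have star : ((ρ_ A).inv ▷ A) ≫ ((A ◁ η) ▷ A) ≫ (v ▷ A) ≫ (α_ A A A).hom ≫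
        (A ◁ (β_ A A).hom) ≫ (α_ A A A).inv ≫ (v ▷ A) ≫ ((A ◁ ε) ▷ A) ≫
        ((ρ_ A).hom ▷ A) = v := by
      slice_lhs 3 7 => rw [hc]
      slice_lhs 2 3 => rw [MonoidalCategory.associator_naturality_middle]
      slice_lhs 3 4 => rw [← MonoidalCategory.whiskerLeft_comp, h4',
        MonoidalCategory.whiskerLeft_comp, MonoidalCategory.whiskerLeft_comp]
      have c1 : ((ρ_ A).inv ▷ A) ≫ (α_ A (𝟙_ V) A).hom ≫ (A ◁ (λ_ A).hom) = 𝟙 (A ⊗ A) := by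
        monoidal
      slice_lhs 1 3 => rw [c1]
      rw [Category.id_comp]
      slice_lhs 2 3 => rw [MonoidalCategory.associator_inv_naturality_right]
      slice_lhs 3 4 => rw [whisker_exchange]
      slice_lhs 4 5 => rw [MonoidalCategory.associator_naturality_right]
      slice_lhs 7 8 => rw [← MonoidalCategory.associator_inv_naturality_middle]
      have c2 : (α_ A (𝟙_ V) A).inv ≫ ((ρ_ A).hom ▷ A) = A ◁ (λ_ A).hom := by monoidal
      slice_lhs 8 9 => rw [c2]
      slice_lhs 5 9 => rw [← MonoidalCategory.whiskerLeft_comp,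
        ← MonoidalCategory.whiskerLeft_comp, ← MonoidalCategory.whiskerLeft_comp, h3,
        ← MonoidalCategory.whiskerLeft_comp_assoc, h5, MonoidalCategory.whiskerLeft_id,
        Category.id_comp]
      have c3 : (α_ A A (𝟙_ V)).hom ≫ (A ◁ (ρ_ A).hom) = (ρ_ (A ⊗ A)).hom := by monoidal
      slice_lhs 4 5 => rw [c3]
      slice_lhs 3 4 => rw [MonoidalCategory.rightUnitor_naturality]
      have c4 : (A ◁ (ρ_ A).inv) ≫ (α_ A A (𝟙_ V)).inv ≫ (ρ_ (A ⊗ A)).hom = 𝟙 (A ⊗ A) := by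
        monoidal
      slice_lhs 1 3 => rw [c4]
      simp
    -- Step 2: a braiding manipulation reduces the goal to `star`.
    have claim : ∀ m : A ⊗ A ⟶ A, ((β_ A A).inv ▷ A) ≫ (α_ A A A).hom ≫ (A ◁ m) ≫
        (β_ A A).hom = (α_ A A A).hom ≫ (A ◁ (β_ A A).hom) ≫ (α_ A A A).inv ≫ (m ▷ A) := by
      intro m
      rw [BraidedCategory.braiding_naturality_right]
      have hex : (α_ A A A).hom ≫ (β_ A (A ⊗ A)).hom =
          ((β_ A A).hom ▷ A) ≫ (α_ A A A).hom ≫ (A ◁ (β_ A A).hom) ≫ (α_ A A A).inv := by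
        rw [← cancel_mono (α_ A A A).hom]
        simpa using BraidedCategory.hexagon_forward (C := V) A A A
      slice_lhs 2 3 => rw [hex]
      slice_lhs 1 2 => rw [← comp_whiskerRight, Iso.inv_hom_id, id_whiskerRight]
      simp
    calc (((ρ_ A).inv ≫ (A ◁ η) ≫ v ≫ (β_ A A).inv) ▷ A) ≫ (α_ A A A).hom ≫
          (A ◁ (v ≫ (A ◁ ε) ≫ (ρ_ A).hom)) ≫ (β_ A A).hom
        = ((ρ_ A).inv ▷ A) ≫ ((A ◁ η) ▷ A) ≫ (v ▷ A) ≫ (((β_ A A).inv ▷ A) ≫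
            (α_ A A A).hom ≫ (A ◁ (v ≫ (A ◁ ε) ≫ (ρ_ A).hom)) ≫ (β_ A A).hom) := by
          simp only [comp_whiskerRight, Category.assoc]
      _ = ((ρ_ A).inv ▷ A) ≫ ((A ◁ η) ▷ A) ≫ (v ▷ A) ≫ (α_ A A A).hom ≫
            (A ◁ (β_ A A).hom) ≫ (α_ A A A).inv ≫ ((v ≫ (A ◁ ε) ≫ (ρ_ A).hom) ▷ A) := by
          rw [claim]
      _ = v := by
          simp only [comp_whiskerRight, Category.assoc] at star ⊢
          exact star
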